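/- Let r be an integer with d ≤ r ≤ n−1 and let K be a subfield of ℝ. The following are equivalent: (1) L_A is contained in an affine subspace of ℝ^{n−1} of dimension r−1 of the form p + span_ℝ{w₁,…,w_{r−1}} with p, w₁,…,w_{r−1} ∈ K^{n−1}; (2) g_A ∈ P_d · P_r · SL_n(K), where SL_n(K) is the subgroup of SL_n(ℝ) consisting of matrices all of whose entries lie in K. -/

import Mathlib

open Matrix MeasureTheory Filter Topology

noncomputable section

abbrev SLn (n : ℕ) := Matrix.SpecialLinearGroup (Fin n) ℝ

instance SLn.topologicalSpace (n : ℕ) : TopologicalSpace (SLn n) :=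
  TopologicalSpace.induced (fun g => (g : Matrix (Fin n) (Fin n) ℝ)) inferInstance

/-- The diagonal flow `g_t = diag(e^{(n-1)t}, e^{-t}, …, e^{-t})`. -/
def gtFlow (n : ℕ) (hn : 0 < n) (t : ℝ) : SLn n :=
  ⟨Matrix.diagonal (fun i => if (i : ℕ) = 0 then Real.exp ((n - 1 : ℝ) * t) else Real.exp (-t)),
    by
      rcases Nat.exists_eq_succ_of_ne_zero hn.ne' with ⟨m, rfl⟩
      rw [Matrix.det_diagonal, Fin.prod_univ_succ]
      have h1 : ∀ i : Fin m,
          (if ((i.succ : Fin (m+1)) : ℕ) = 0 then Real.exp (((m.succ : ℝ) - 1) * t)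
            else Real.exp (-t)) = Real.exp (-t) := by
        intro i; simp [Fin.val_succ]
      rw [Finset.prod_congr rfl (fun i _ => h1 i)]
      simp only [Fin.val_zero, if_true, Finset.prod_const, Finset.card_univ,
        Fintype.card_fin, if_true]
      rw [← Real.exp_nat_mul, ← Real.exp_add]
      have h2 : ((m.succ : ℝ) - 1) * t + (m : ℝ) * -t = 0 := by push_cast; ring
      rw [h2, Real.exp_zero]⟩

/-- The unipotent element `u(v)` whose first row is `(1, v)`. -/
def uv (n : ℕ) (v : Fin (n - 1) → ℝ) : SLn n :=
  ⟨Matrix.of fun i j =>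
      if i = j then 1
      else if hij : (i : ℕ) = 0 ∧ (j : ℕ) ≠ 0 then v ⟨(j : ℕ) - 1, by have := j.isLt; omega⟩
      else 0,
    by
      have h := Matrix.det_of_upperTriangular (M := Matrix.of fun i j : Fin n =>
        if i = j then (1:ℝ)
        else if hij : (i : ℕ) = 0 ∧ (j : ℕ) ≠ 0 then v ⟨(j : ℕ) - 1, by have := j.isLt; omega⟩
        else 0) ?_
      · rw [h]; simp
      · intro i j hji
        have hij : ¬ i = j := by exact fun h => absurd h (by exact Fin.ne_of_gt hji)
        have : ¬ ((i : ℕ) = 0 ∧ (j : ℕ) ≠ 0) := by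
          rintro ⟨hi, -⟩
          have : (j : ℕ) < (i : ℕ) := hji
          omega
        simp [hij, this]⟩

/-- The block matrix `(I_d  A ; 0  I_{n-d})` as an element of `SL_n(ℝ)`. -/
def gA (n d : ℕ) (A : Matrix (Fin d) (Fin (n - d)) ℝ) : SLn n :=
  ⟨Matrix.of fun i j =>
      if i = j then 1
      else if hij : (i : ℕ) < d ∧ d ≤ (j : ℕ) then
        A ⟨i, hij.1⟩ ⟨(j : ℕ) - d, by have := j.isLt; omega⟩
      else 0,
    by
      have h := Matrix.det_of_upperTriangular (M := Matrix.of fun i j : Fin n =>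
        if i = j then (1:ℝ)
        else if hij : (i : ℕ) < d ∧ d ≤ (j : ℕ) then
          A ⟨i, hij.1⟩ ⟨(j : ℕ) - d, by have := j.isLt; omega⟩
        else 0) ?_
      · rw [h]; simp
      · intro i j hji
        have hij : ¬ i = j := Fin.ne_of_gt hji
        have hlt : (j : ℕ) < (i : ℕ) := hji
        have : ¬ ((i : ℕ) < d ∧ d ≤ (j : ℕ)) := by omega
        simp [hij, this]⟩

/-- The flow `b_t = diag(e^{((n-d)/d)t} I_d, e^{-t} I_{n-d})`. -/
def btFlow (n d : ℕ) (hd : 0 < d) (hdn : d ≤ n) (t : ℝ) : SLn n :=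
  ⟨Matrix.diagonal (fun i =>
      if (i : ℕ) < d then Real.exp (((n : ℝ) - d) / d * t) else Real.exp (-t)),
    by
      rw [Matrix.det_diagonal]
      have key : ∀ i : Fin n,
          (if (i : ℕ) < d then Real.exp (((n : ℝ) - d) / d * t) else Real.exp (-t))
            = Real.exp (if (i : ℕ) < d then ((n : ℝ) - d) / d * t else -t) := by
        intro i; split <;> rfl
      rw [Finset.prod_congr rfl (fun i _ => key i), ← Real.exp_sum]
      have hsum : (∑ i : Fin n, if (i : ℕ) < d then ((n : ℝ) - d) / d * t else -t) = 0 := by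
        rw [Fin.sum_univ_eq_sum_range (fun i => if i < d then ((n : ℝ) - d) / d * t else -t) n]
        rw [Finset.range_eq_Ico, ← Finset.sum_Ico_consecutive _ (Nat.zero_le d) hdn]
        rw [Finset.sum_congr rfl (fun i hi => if_pos (Finset.mem_Ico.mp hi).2),
          Finset.sum_congr rfl (g := fun _ => -t)
            (fun i hi => if_neg (by have := (Finset.mem_Ico.mp hi).1; omega))]
        simp only [Finset.sum_const, Nat.card_Ico, nsmul_eq_mul, Nat.sub_zero]
        have hd' : (d : ℝ) ≠ 0 := Nat.cast_ne_zero.mpr hd.ne'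
        have hnd : ((n - d : ℕ) : ℝ) = (n : ℝ) - d := by
          push_cast [Nat.cast_sub hdn]; ring
        rw [hnd]
        field_simp
        ring
      rw [hsum, Real.exp_zero]⟩

/-- The vector `(1, x) ∈ ℝ^d` obtained by prepending `1` to `x ∈ ℝ^{d-1}`. -/
def tildeVec (d : ℕ) (x : Fin (d - 1) → ℝ) : Fin d → ℝ :=
  fun i => if h : (i : ℕ) = 0 then 1 else x ⟨(i : ℕ) - 1, by have := i.isLt; omega⟩

/-- The affine subspace `L_A = {(x, (1,x)A) : x ∈ ℝ^{d-1}}` of `ℝ^{n-1}`. -/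
def LAset (n d : ℕ) (hd : 2 ≤ d) (hdn : d ≤ n - 1) (A : Matrix (Fin d) (Fin (n - d)) ℝ) :
    Set (Fin (n - 1) → ℝ) :=
  {y | ∃ x : Fin (d - 1) → ℝ, y = fun j : Fin (n - 1) =>
    if h : (j : ℕ) < d - 1 then x ⟨(j : ℕ), h⟩
    else ∑ i : Fin d, tildeVec d x i * A i ⟨(j : ℕ) - (d - 1), by have := j.isLt; omega⟩}

/-- `A ∈ W_r(ι, κ)`: there is `C > 0` such that `‖Aq + p‖ ≤ C‖q‖^{-r}` has
infinitely many integer solutions. -/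
def MemW (r : ℝ) {ι κ : Type*} [Fintype ι] [Fintype κ] (A : Matrix ι κ ℝ) : Prop :=
  ∃ C : ℝ, 0 < C ∧ {pq : (ι → ℤ) × (κ → ℤ) |
    ‖A.mulVec (fun j => ((pq.2 j : ℝ))) + (fun i => ((pq.1 i : ℝ)))‖
      ≤ C * ‖(fun j => ((pq.2 j : ℝ)) : κ → ℝ)‖ ^ (-r)}.Infinite

/-- `A ∈ W'_r(ι, κ)`: for every `C > 0` the inequality `‖Aq + p‖ ≤ C‖q‖^{-r}` has
a nonzero integer solution. -/
def MemW' (r : ℝ) {ι κ : Type*} [Fintype ι] [Fintype κ] (A : Matrix ι κ ℝ) : Prop :=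
  ∀ C : ℝ, 0 < C → ∃ pq : (ι → ℤ) × (κ → ℤ), pq ≠ 0 ∧
    ‖A.mulVec (fun j => ((pq.2 j : ℝ))) + (fun i => ((pq.1 i : ℝ)))‖
      ≤ C * ‖(fun j => ((pq.2 j : ℝ)) : κ → ℝ)‖ ^ (-r)

/-- `Γ = SL_n(ℤ)` as a subgroup of `SL_n(ℝ)`. -/
def Gamma (n : ℕ) : Subgroup (SLn n) :=
  (Matrix.SpecialLinearGroup.map (n := Fin n) (Int.castRingHom ℝ)).range

/-- The homogeneous space `X = SL_n(ℝ)/SL_n(ℤ)`. -/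
abbrev XSpace (n : ℕ) := SLn n ⧸ Gamma n

instance (n : ℕ) : MeasurableSpace (XSpace n) := borel _

/-- The column indices `1 ≤ i < j ≤ n-2` of the matrix `A^ext`. -/
abbrev PairIdx (n : ℕ) := {p : Fin (n - 2) × Fin (n - 2) // p.1 < p.2}

/-- The matrix `A^ext` associated to a `2 × (n-2)` matrix `A`. -/
def Aext (n : ℕ) (A : Matrix (Fin 2) (Fin (n - 2)) ℝ) :
    Matrix (Fin (n - 2) ⊕ (Fin (n - 2) ⊕ Unit)) (PairIdx n) ℝ :=
  Matrix.of fun row col =>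
    match row with
    | Sum.inl k =>
        if k = col.1.1 then -(A 0 col.1.2) else if k = col.1.2 then A 0 col.1.1 else 0
    | Sum.inr (Sum.inl k) =>
        if k = col.1.1 then -(A 1 col.1.2) else if k = col.1.2 then A 1 col.1.1 else 0
    | Sum.inr (Sum.inr _) => A 0 col.1.2 * A 1 col.1.1 - A 0 col.1.1 * A 1 col.1.2

/-- Inclusion of `SL_n(ℤ)` into `SL_n(ℝ)`. -/
def SLmapZ (n : ℕ) : Matrix.SpecialLinearGroup (Fin n) ℤ →* SLn n :=
  Matrix.SpecialLinearGroup.map (Int.castRingHom ℝ)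

/-- Index of the standard basis of `⋀^k ℝ^N`: subsets of `Fin N` of cardinality `k`. -/
abbrev WIdx (N k : ℕ) := {s : Finset (Fin N) // s.card = k}

/-- Identification of `ι → ℝ` with the Euclidean space indexed by `ι`. -/
def toEuc {ι : Type*} [Fintype ι] (f : ι → ℝ) : EuclideanSpace ℝ ι :=
  (WithLp.equiv 2 (ι → ℝ)).symm f

/-- The Plücker coordinates of the wedge `w₁ ∧ ⋯ ∧ w_k` of vectors in `ℝ^N`. -/
def wedgeCoords (N k : ℕ) (w : Fin k → (Fin N → ℝ)) : WIdx N k → ℝ :=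
  fun S => (Matrix.of fun a b : Fin k => w a ((S.1.orderIsoOfFin S.2 b : Fin N))).det

/-- The wedge `w₁ ∧ ⋯ ∧ w_k` as an element of the Euclidean space `⋀^k ℝ^N`. -/
def wedgeE (N k : ℕ) (w : Fin k → (Fin N → ℝ)) : EuclideanSpace ℝ (WIdx N k) :=
  toEuc (wedgeCoords N k w)

/-- The `k`-th compound matrix, giving the action of a matrix on `⋀^k ℝ^N`
in Plücker coordinates. -/
def compound (N k : ℕ) (M : Matrix (Fin N) (Fin N) ℝ) : Matrix (WIdx N k) (WIdx N k) ℝ :=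
  Matrix.of fun S T =>
    (Matrix.of fun a b : Fin k =>
      M ((S.1.orderIsoOfFin S.2 a : Fin N)) ((T.1.orderIsoOfFin T.2 b : Fin N))).det

/-- Action of `g ∈ SL_n(ℝ)` on `⋀^k ℝ^N` in Plücker coordinates. -/
def wedgeAction (N k : ℕ) (M : Matrix (Fin N) (Fin N) ℝ) (w : EuclideanSpace ℝ (WIdx N k)) :
    EuclideanSpace ℝ (WIdx N k) :=
  toEuc ((compound N k M).mulVec (WithLp.equiv 2 _ w))

/-- The parabolic subgroup `P_j ⊆ SL_n(ℝ)` (block lower triangular with an upper-left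
`j × j` block), as a set. -/
def Pblock (n j : ℕ) : Set (SLn n) :=
  {g | ∀ s t : Fin n, (s : ℕ) < j → j ≤ (t : ℕ) → (g : Matrix (Fin n) (Fin n) ℝ) s t = 0}

/-- A vector `y ∈ ℝ^{n-1}` is Dirichlet-improvable. -/
def DirichletImprovable (n : ℕ) (y : Fin (n - 1) → ℝ) : Prop :=
  ∃ δ : ℝ, 0 < δ ∧ δ < 1 ∧ ∃ T₀ : ℝ, ∀ T : ℝ, T₀ ≤ T →
    ∃ (p : Fin (n - 1) → ℤ) (q : ℤ), q ≠ 0 ∧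
      ‖(fun i => (q : ℝ) * y i + (p i : ℝ) : Fin (n - 1) → ℝ)‖ ≤ δ / T ∧
      |(q : ℝ)| ≤ T ^ (n - 1)

/-- Flattening of an `n × n` matrix into a vector in `ℝ^{n·n}`. -/
def flatten (n : ℕ) (M : Matrix (Fin n) (Fin n) ℝ) : Fin (n * n) → ℝ :=
  fun idx => M (finProdFinEquiv.symm idx).1 (finProdFinEquiv.symm idx).2

/-- The adjoint action `Ad(g) : x ↦ g x g⁻¹` of `g ∈ SL_n(ℝ)` written as an
`(n·n) × (n·n)` matrix in the flattened coordinates. -/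
def AdMatrix (n : ℕ) (g : SLn n) : Matrix (Fin (n * n)) (Fin (n * n)) ℝ :=
  Matrix.of fun r c =>
    (g : Matrix (Fin n) (Fin n) ℝ) (finProdFinEquiv.symm r).1 (finProdFinEquiv.symm c).1 *
    ((g⁻¹ : SLn n) : Matrix (Fin n) (Fin n) ℝ) (finProdFinEquiv.symm c).2 (finProdFinEquiv.symm r).2


namespace Interp

/-- The submodule of vectors in `ℝ^n` vanishing at coordinates `≥ j`. -/
def Esub (n j : ℕ) : Submodule ℝ (Fin n → ℝ) where
  carrier := {x | ∀ t : Fin n, j ≤ (t : ℕ) → x t = 0}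
  add_mem' := fun {a b} ha hb t ht => by simp [Pi.add_apply, ha t ht, hb t ht]
  zero_mem' := fun t _ => rfl
  smul_mem' := fun c x hx t ht => by simp [hx t ht]

lemma mem_Esub {n j : ℕ} {x : Fin n → ℝ} :
    x ∈ Esub n j ↔ ∀ t : Fin n, j ≤ (t : ℕ) → x t = 0 := Iff.rfl

lemma sum_single_smul {m : ℕ} {V : Type*} [AddCommGroup V] [Module ℝ V]
    (a : Fin m) (b : ℝ) (u : Fin m → V) :
    ∑ i, (Pi.single a b : Fin m → ℝ) i • u i = b • u a := by
  rw [Finset.sum_eq_single a]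
  · rw [Pi.single_eq_same]
  · intro i _ hia
    rw [Pi.single_eq_of_ne hia, zero_smul]
  · intro h; exact absurd (Finset.mem_univ a) h

lemma sum_single_apply {n k : ℕ} (hk : k ≤ n) (c : Fin k → ℝ) (t : Fin n) :
    (∑ i : Fin k, c i • (Pi.single (Fin.castLE hk i) (1:ℝ) : Fin n → ℝ)) t
      = if h : (t : ℕ) < k then c ⟨t, h⟩ else 0 := by
  rw [Finset.sum_apply]
  split
  · next h =>
    rw [Finset.sum_eq_single (⟨(t : ℕ), h⟩ : Fin k)]
    · have : Fin.castLE hk (⟨(t : ℕ), h⟩ : Fin k) = t := by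
        apply Fin.ext; rfl
      rw [Pi.smul_apply, this, Pi.single_eq_same, smul_eq_mul, mul_one]
    · intro i _ hne
      have : Fin.castLE hk i ≠ t := by
        intro hcontra
        apply hne; apply Fin.ext
        have := congrArg Fin.val hcontra
        simpa using this
      rw [Pi.smul_apply, Pi.single_eq_of_ne' this, smul_eq_mul, mul_zero]
    · intro h'; exact absurd (Finset.mem_univ _) h'
  · next h =>
    apply Finset.sum_eq_zero
    intro i _
    have : Fin.castLE hk i ≠ t := by
      intro hcontra
      apply h
      have := congrArg Fin.val hcontra
      simp at this
      omega
    rw [Pi.smul_apply, Pi.single_eq_of_ne' this, smul_eq_mul, mul_zero]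

lemma esub_eq_span {n j : ℕ} (hj : n ≥ j) :
    Esub n j = Submodule.span ℝ
      (Set.range fun i : Fin j => (Pi.single (Fin.castLE hj i) (1:ℝ) : Fin n → ℝ)) := by
  apply le_antisymm
  · intro x hx
    rw [Submodule.mem_span_range_iff_exists_fun]
    refine ⟨fun i => x (Fin.castLE hj i), ?_⟩
    funext t
    rw [sum_single_apply]
    split
    · next h => rfl
    · next h => exact (hx t (by omega)).symm
  · rw [Submodule.span_le]
    rintro x ⟨i, rfl⟩
    intro t ht
    apply Pi.single_eq_of_ne'
    intro hcontra
    have := congrArg Fin.val hcontra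
    simp at this
    omega

lemma esub_finrank {n j : ℕ} (hj : j ≤ n) : Module.finrank ℝ (Esub n j) = j := by
  rw [esub_eq_span hj, finrank_span_eq_card]
  · exact Fintype.card_fin j
  · have : (fun i : Fin j => (Pi.single (Fin.castLE hj i) (1:ℝ) : Fin n → ℝ))
        = (Pi.basisFun ℝ (Fin n)) ∘ (Fin.castLE hj) := by
      funext i; simp [Pi.basisFun_apply]
    rw [this]
    exact (Pi.basisFun ℝ (Fin n)).linearIndependent.comp _ (Fin.castLE_injective hj)

lemma ordered_extend {n k m : ℕ} (hkm : k ≤ m) (t : Set (Fin n → ℝ))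
    (v : Fin k → (Fin n → ℝ)) (hv : LinearIndependent ℝ v) (hvt : ∀ i, v i ∈ t)
    (hm : Module.finrank ℝ (Submodule.span ℝ t) = m) :
    ∃ w : Fin m → (Fin n → ℝ), LinearIndependent ℝ w ∧ (∀ i, w i ∈ t) ∧
      ∀ i : Fin k, w (Fin.castLE hkm i) = v i := by
  classical
  have hs : LinearIndependent ℝ ((↑) : Set.range v → (Fin n → ℝ)) := (linearIndepOn_id_range_iff hv.injective).2 hv
  obtain ⟨b, hbt, hsb, htb, hb⟩ :=
    exists_linearIndepOn_id_extension hs (Set.range_subset_iff.2 hvt)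
  replace hb : LinearIndependent ℝ ((↑) : b → (Fin n → ℝ)) := hb
  have hbfin : b.Finite := hb.setFinite
  haveI : Fintype b := hbfin.fintype
  haveI : Fintype (Set.range v) := Set.fintypeRange v
  have hspan : Submodule.span ℝ b = Submodule.span ℝ t :=
    le_antisymm (Submodule.span_mono hbt) (Submodule.span_le.2 htb)
  have hcardb : Fintype.card b = m := by
    have h1 := finrank_span_set_eq_card hb
    rw [hspan, hm, Set.toFinset_card] at h1
    omega
  have hinj : Function.Injective v := hv.injective
  have hcards : Fintype.card (Set.range v) = k := by
    rw [Set.card_range_of_injective hinj, Fintype.card_fin]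
  haveI : Fintype ↥(b \ Set.range v) := (hbfin.subset Set.diff_subset).fintype
  have hncard : ∀ (X : Set (Fin n → ℝ)) (_ : Fintype X), Fintype.card X = X.ncard := by
    intro X hX
    rw [← Nat.card_coe_set_eq, Nat.card_eq_fintype_card]
  have hcardd : Fintype.card ↥(b \ Set.range v) = m - k := by
    rw [hncard _ _, Set.ncard_diff hsb (Set.toFinite _), ← hncard _ _, ← hncard _ _,
      hcardb, hcards]
  set e₂ : Fin (m - k) ≃ ↥(b \ Set.range v) := (Fintype.equivFinOfCardEq hcardd).symm with he₂
  set w : Fin m → (Fin n → ℝ) := fun i =>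
    if h : (i : ℕ) < k then v ⟨(i : ℕ), h⟩
    else ((e₂ ⟨(i : ℕ) - k, by have := i.isLt; omega⟩ : ↥(b \ Set.range v)) : Fin n → ℝ)
    with hw
  have hwb : ∀ i, w i ∈ b := by
    intro i
    rw [hw]
    dsimp only
    split
    · exact hsb (Set.mem_range_self _)
    · exact (e₂ _).2.1
  have hwinj : Function.Injective w := by
    intro i j hij
    rw [hw] at hij
    dsimp only at hij
    split at hij <;> split at hij
    · next h1 h2 =>
      have := hinj hij
      have := congrArg Fin.val this
      simp at this; exact Fin.ext this
    · next h1 h2 =>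
      exact absurd ⟨⟨(i : ℕ), h1⟩, hij⟩ (e₂ _).2.2
    · next h1 h2 =>
      exact absurd ⟨⟨(j : ℕ), h2⟩, hij.symm⟩ (e₂ _).2.2
    · next h1 h2 =>
      have := e₂.injective (Subtype.ext hij)
      have := congrArg Fin.val this
      simp at this
      apply Fin.ext
      omega
  have hE : Function.Bijective (fun i => (⟨w i, hwb i⟩ : ↥b)) := by
    rw [Fintype.bijective_iff_injective_and_card]
    constructor
    · intro i j hij
      exact hwinj (congrArg Subtype.val hij)
    · rw [Fintype.card_fin, hcardb]
  have hwli : LinearIndependent ℝ w := by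
    have := hb.comp (Equiv.ofBijective _ hE) (Equiv.injective _)
    exact this
  refine ⟨w, hwli, fun i => hbt (hwb i), ?_⟩
  intro i
  rw [hw]
  dsimp only
  rw [dif_pos (by simp only [Fin.coe_castLE]; exact i.isLt)]
  exact congrArg v (Fin.ext rfl)

lemma span_K_top (n : ℕ) (K : Subfield ℝ) :
    Submodule.span ℝ {x : Fin n → ℝ | ∀ j, x j ∈ K} = ⊤ := by
  rw [eq_top_iff]
  intro x _
  have hx : x = ∑ i, x i • (Pi.single i (1:ℝ) : Fin n → ℝ) := by
    funext t
    rw [Finset.sum_apply, Finset.sum_eq_single t]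
    · simp
    · intro i _ hne
      rw [Pi.smul_apply, Pi.single_eq_of_ne hne.symm, smul_eq_mul, mul_zero]
    · intro h; exact absurd (Finset.mem_univ _) h
  rw [hx]
  refine Submodule.sum_mem _ fun i _ => Submodule.smul_mem _ _ (Submodule.subset_span ?_)
  intro j
  rcases eq_or_ne j i with rfl | hne
  · simp [Pi.single_eq_same]
  · rw [Pi.single_eq_of_ne hne]; exact K.zero_mem

lemma exists_SL_extend {n r : ℕ} (hr : r < n) (K : Subfield ℝ)
    (v : Fin r → (Fin n → ℝ)) (hv : LinearIndependent ℝ v) (hvK : ∀ i j, v i j ∈ K) :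
    ∃ h : SLn n, (∀ i j, (h : Matrix (Fin n) (Fin n) ℝ) i j ∈ K) ∧
      ∀ i : Fin r, (h : Matrix (Fin n) (Fin n) ℝ) (Fin.castLE hr.le i) = v i := by
  classical
  set t : Set (Fin n → ℝ) := {x | ∀ j, x j ∈ K} with ht
  have hm : Module.finrank ℝ (Submodule.span ℝ t) = n := by
    rw [ht, span_K_top n K, finrank_top, Module.finrank_fintype_fun_eq_card, Fintype.card_fin]
  obtain ⟨w, hwli, hwt, hwv⟩ := ordered_extend hr.le t v hv (fun i j => hvK i j) hm
  set M : Matrix (Fin n) (Fin n) ℝ := Matrix.of w with hM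
  have hMunit : IsUnit M := by
    rw [← Matrix.linearIndependent_rows_iff_isUnit]
    exact hwli
  have hdet : IsUnit M.det := M.isUnit_iff_isUnit_det.1 hMunit
  have hdetne : M.det ≠ 0 := hdet.ne_zero
  have hdetK : M.det ∈ K := by
    have : M = (K.subtype).mapMatrix (Matrix.of fun i j => (⟨M i j, hwt i j⟩ : K)) := by
      ext i j; rfl
    rw [this, ← RingHom.map_det]
    exact SetLike.coe_mem _
  have hn0 : 0 < n := lt_of_le_of_lt (Nat.zero_le r) hr
  set li : Fin n := ⟨n - 1, by omega⟩ with hli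
  set M' : Matrix (Fin n) (Fin n) ℝ := M.updateRow li ((M.det)⁻¹ • M li) with hM'
  have hdet' : M'.det = 1 := by
    rw [hM', Matrix.det_updateRow_smul, Matrix.updateRow_eq_self, inv_mul_cancel₀ hdetne]
  refine ⟨⟨M', hdet'⟩, ?_, ?_⟩
  · intro i j
    show M' i j ∈ K
    rw [hM']
    rcases eq_or_ne i li with rfl | hne
    · rw [Matrix.updateRow_self]
      exact K.mul_mem (K.inv_mem hdetK) (hwt _ _)
    · rw [Matrix.updateRow_ne hne]
      exact hwt _ _
  · intro i
    show M' (Fin.castLE hr.le i) = v i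
    rw [hM', Matrix.updateRow_ne, ← hwv i]
    · rfl
    · intro hcontra
      have := congrArg Fin.val hcontra
      simp [hli] at this
      omega

lemma pblock_mul {n j : ℕ} {p q : SLn n} (hp : p ∈ Pblock n j) (hq : q ∈ Pblock n j) :
    p * q ∈ Pblock n j := by
  intro s t hs ht
  rw [Matrix.SpecialLinearGroup.coe_mul, Matrix.mul_apply]
  apply Finset.sum_eq_zero
  intro u _
  rcases lt_or_ge (u : ℕ) j with hu | hu
  · rw [hq u t hu ht, mul_zero]
  · rw [hp s u hs hu, zero_mul]

lemma pblock_inv {n j : ℕ} {g : SLn n} (hg : g ∈ Pblock n j) : g⁻¹ ∈ Pblock n j := by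
  classical
  intro s t hs ht
  rw [Matrix.SpecialLinearGroup.coe_inv, Matrix.adjugate_apply]
  by_contra hne
  have hjn : j < n := lt_of_le_of_lt ht t.isLt
  set A' : Matrix (Fin n) (Fin n) ℝ :=
    ((g : Matrix (Fin n) (Fin n) ℝ).updateRow t (Pi.single s 1)) with hA'
  have hunit : IsUnit A' := A'.isUnit_iff_isUnit_det.2 (isUnit_iff_ne_zero.2 hne)
  have hrows : LinearIndependent ℝ (fun i => A' i) :=
    Matrix.linearIndependent_rows_iff_isUnit.2 hunit
  set f : Fin (j + 1) → Fin n := fun i =>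
    if h : (i : ℕ) < j then ⟨(i : ℕ), by omega⟩ else t with hf
  have hfinj : Function.Injective f := by
    intro a b hab
    rw [hf] at hab
    dsimp only at hab
    split at hab <;> split at hab
    · next h1 h2 => have := congrArg Fin.val hab; simp at this; exact Fin.ext this
    · next h1 h2 =>
      have := congrArg Fin.val hab; simp at this; omega
    · next h1 h2 =>
      have := congrArg Fin.val hab; simp at this; omega
    · next h1 h2 => apply Fin.ext; have := a.isLt; have := b.isLt; omega
  have hmem : ∀ i : Fin (j + 1), A' (f i) ∈ Esub n j := by
    intro i
    rw [hf]
    dsimp only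
    split
    · next h =>
      have hne' : (⟨(i : ℕ), by omega⟩ : Fin n) ≠ t := by
        intro hc; have := congrArg Fin.val hc; simp at this; omega
      rw [hA', Matrix.updateRow_ne hne']
      intro t' ht'
      exact hg _ t' h ht'
    · next h =>
      rw [hA', Matrix.updateRow_self]
      intro t' ht'
      apply Pi.single_eq_of_ne
      intro hc; have := congrArg Fin.val hc; omega
  have hli2 : LinearIndependent ℝ (fun i : Fin (j+1) => (⟨A' (f i), hmem i⟩ : Esub n j)) := by
    apply LinearIndependent.of_comp (Esub n j).subtype
    exact hrows.comp f hfinj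
  have hcard := hli2.fintype_card_le_finrank
  rw [esub_finrank hjn.le, Fintype.card_fin] at hcard
  omega

/-- prepend a coordinate -/
def lift (n : ℕ) (a : ℝ) (y : Fin (n - 1) → ℝ) : Fin n → ℝ :=
  fun i => if h : (i : ℕ) = 0 then a else y ⟨(i : ℕ) - 1, by have := i.isLt; omega⟩

/-- drop the first coordinate -/
def tail (n : ℕ) (v : Fin n → ℝ) : Fin (n - 1) → ℝ :=
  fun j => v ⟨(j : ℕ) + 1, by have := j.isLt; omega⟩

/-- the point of `L_A` with parameter `x` -/
def LApt (n d : ℕ) (A : Matrix (Fin d) (Fin (n - d)) ℝ) (x : Fin (d - 1) → ℝ) :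
    Fin (n - 1) → ℝ :=
  fun j : Fin (n - 1) =>
    if h : (j : ℕ) < d - 1 then x ⟨(j : ℕ), h⟩
    else ∑ i : Fin d, tildeVec d x i * A i ⟨(j : ℕ) - (d - 1), by have := j.isLt; omega⟩

lemma mem_LAset_iff {n d : ℕ} (hd : 2 ≤ d) (hdn : d ≤ n - 1)
    {A : Matrix (Fin d) (Fin (n - d)) ℝ} {y : Fin (n - 1) → ℝ} :
    y ∈ LAset n d hd hdn A ↔ ∃ x, y = LApt n d A x := Iff.rfl

lemma tail_lift {n : ℕ} (hn : 1 ≤ n) (a : ℝ) (y : Fin (n - 1) → ℝ) :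
    tail n (lift n a y) = y := by
  funext j
  show lift n a y _ = y j
  rw [lift, dif_neg (by simp)]
  exact congrArg y (Fin.ext rfl)

lemma lift_zero {n : ℕ} (hn : 0 < n) (a : ℝ) (y : Fin (n - 1) → ℝ) :
    lift n a y ⟨0, hn⟩ = a := by simp [lift]

lemma lift_head_tail {n : ℕ} (hn : 0 < n) (v : Fin n → ℝ) :
    lift n (v ⟨0, hn⟩) (tail n v) = v := by
  funext i
  rw [lift]
  split
  · next h => exact congrArg v (Fin.ext h.symm)
  · next h =>
    show v _ = v i
    exact congrArg v (Fin.ext (by simp; omega))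

def lift0Map (n : ℕ) : (Fin (n - 1) → ℝ) →ₗ[ℝ] (Fin n → ℝ) where
  toFun y := lift n 0 y
  map_add' a b := by
    funext i; by_cases h : (i : ℕ) = 0 <;> simp [lift, h]
  map_smul' c a := by
    funext i; by_cases h : (i : ℕ) = 0 <;> simp [lift, h]

lemma lift0Map_apply (n : ℕ) (y : Fin (n - 1) → ℝ) : lift0Map n y = lift n 0 y := rfl

def tailMap (n : ℕ) : (Fin n → ℝ) →ₗ[ℝ] (Fin (n - 1) → ℝ) where
  toFun := tail n
  map_add' _ _ := rfl
  map_smul' _ _ := rfl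

lemma tailMap_apply (n : ℕ) (v : Fin n → ℝ) : tailMap n v = tail n v := rfl

lemma lift_one_add (n : ℕ) (p q : Fin (n - 1) → ℝ) :
    lift n 1 (p + q) = lift n 1 p + lift n 0 q := by
  funext i; by_cases h : (i : ℕ) = 0 <;> simp [lift, h]

lemma eq_zero_head_tail {n : ℕ} (hn : 0 < n) (v : Fin n → ℝ) (h0 : v ⟨0, hn⟩ = 0)
    (ht : tail n v = 0) : v = 0 := by
  funext i
  by_cases h : (i : ℕ) = 0
  · rw [show i = (⟨0, hn⟩ : Fin n) from Fin.ext h]; exact h0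
  · have h2 := congrFun ht ⟨(i : ℕ) - 1, by have := i.isLt; omega⟩
    simp only [tail, Pi.zero_apply] at h2
    rw [Pi.zero_apply]
    exact (congrArg v (Fin.ext (by simp; omega))).trans h2

lemma sum_fin_restrict {r n : ℕ} (hrn : r ≤ n) (f : Fin n → ℝ)
    (hf : ∀ v : Fin n, r ≤ (v : ℕ) → f v = 0) :
    ∑ v, f v = ∑ i : Fin r, f (Fin.castLE hrn i) := by
  classical
  have key : ∑ v : Fin n, f v
      = ∑ v ∈ Finset.univ.filter (fun v : Fin n => (v : ℕ) < r), f v := by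
    refine (Finset.sum_subset (Finset.filter_subset _ _) ?_).symm
    intro x _ hx
    simp only [Finset.mem_filter, Finset.mem_univ, true_and, not_lt] at hx
    exact hf x hx
  have himg : Finset.univ.filter (fun v : Fin n => (v : ℕ) < r)
      = Finset.image (Fin.castLE hrn) Finset.univ := by
    ext v
    simp only [Finset.mem_filter, Finset.mem_univ, true_and, Finset.mem_image]
    constructor
    · intro hv; exact ⟨⟨(v : ℕ), hv⟩, Fin.ext rfl⟩
    · rintro ⟨i, rfl⟩
      exact lt_of_lt_of_le i.isLt le_rfl
  rw [key, himg, Finset.sum_image (fun a _ b _ h => Fin.castLE_injective hrn h)]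

lemma vecMul_apply {n : ℕ} (x : Fin n → ℝ) (B : Matrix (Fin n) (Fin n) ℝ) (t : Fin n) :
    Matrix.vecMul x B t = ∑ s, x s * B s t := by
  simp [Matrix.vecMul, dotProduct]

lemma vecMul_single {n : ℕ} (a : Fin n) (B : Matrix (Fin n) (Fin n) ℝ) :
    Matrix.vecMul (Pi.single a 1) B = B a := by
  funext t
  rw [vecMul_apply, Finset.sum_eq_single a]
  · rw [Pi.single_eq_same, one_mul]
  · intro i _ hia
    rw [Pi.single_eq_of_ne hia, zero_mul]
  · intro h; exact absurd (Finset.mem_univ a) h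

lemma finrank_comap_vecMul {n j : ℕ} (hj : j ≤ n) (g : SLn n) :
    Module.finrank ℝ
      ((Esub n j).comap (Matrix.vecMulLinear (g : Matrix (Fin n) (Fin n) ℝ))) = j := by
  have hinv : ((g⁻¹ : SLn n) : Matrix (Fin n) (Fin n) ℝ) * (g : Matrix (Fin n) (Fin n) ℝ)
      = 1 := by
    rw [← Matrix.SpecialLinearGroup.coe_mul, inv_mul_cancel, Matrix.SpecialLinearGroup.coe_one]
  have hinv' : (g : Matrix (Fin n) (Fin n) ℝ) * ((g⁻¹ : SLn n) : Matrix (Fin n) (Fin n) ℝ)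
      = 1 := by
    rw [← Matrix.SpecialLinearGroup.coe_mul, mul_inv_cancel, Matrix.SpecialLinearGroup.coe_one]
  set e : (Fin n → ℝ) ≃ₗ[ℝ] (Fin n → ℝ) :=
    LinearEquiv.ofLinear (Matrix.vecMulLinear (g : Matrix (Fin n) (Fin n) ℝ))
      (Matrix.vecMulLinear ((g⁻¹ : SLn n) : Matrix (Fin n) (Fin n) ℝ))
      (by
        apply LinearMap.ext; intro x
        simp only [LinearMap.comp_apply, Matrix.vecMulLinear_apply, LinearMap.id_apply]
        rw [Matrix.vecMul_vecMul, hinv, Matrix.vecMul_one])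
      (by
        apply LinearMap.ext; intro x
        simp only [LinearMap.comp_apply, Matrix.vecMulLinear_apply, LinearMap.id_apply]
        rw [Matrix.vecMul_vecMul, hinv', Matrix.vecMul_one]) with he
  have hee : Matrix.vecMulLinear (g : Matrix (Fin n) (Fin n) ℝ)
      = (e : (Fin n → ℝ) →ₗ[ℝ] (Fin n → ℝ)) := rfl
  rw [hee, Submodule.comap_equiv_eq_map_symm, LinearEquiv.finrank_map_eq, esub_finrank hj]

lemma gA_apply (n d : ℕ) (A : Matrix (Fin d) (Fin (n - d)) ℝ) (i j : Fin n) :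
    (gA n d A : Matrix (Fin n) (Fin n) ℝ) i j =
      if i = j then 1
      else if hij : (i : ℕ) < d ∧ d ≤ (j : ℕ) then
        A ⟨i, hij.1⟩ ⟨(j : ℕ) - d, by have := j.isLt; omega⟩
      else 0 := rfl

lemma tildeVec_zero {d : ℕ} (hd : 2 ≤ d) :
    tildeVec d 0 = Pi.single (⟨0, by omega⟩ : Fin d) 1 := by
  funext i
  rw [tildeVec]
  split
  · next h =>
    have : i = (⟨0, by omega⟩ : Fin d) := Fin.ext h
    rw [this, Pi.single_eq_same]
  · next h =>
    rw [Pi.single_eq_of_ne (by intro hc; exact h (congrArg Fin.val hc)), Pi.zero_apply]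

lemma tildeVec_single {d : ℕ} (hd : 2 ≤ d) (j : Fin (d - 1)) :
    tildeVec d (Pi.single j 1) =
      Pi.single (⟨0, by omega⟩ : Fin d) 1
        + Pi.single (⟨(j : ℕ) + 1, by have := j.isLt; omega⟩ : Fin d) 1 := by
  funext i
  rw [tildeVec, Pi.add_apply]
  split
  · next h =>
    have e2 : (Pi.single (⟨(j : ℕ) + 1, by have := j.isLt; omega⟩ : Fin d) 1 : Fin d → ℝ) i = 0 :=
      Pi.single_eq_of_ne (by intro hc; have := congrArg Fin.val hc; simp at this; omega) 1
    have e1 : (Pi.single (⟨0, by omega⟩ : Fin d) 1 : Fin d → ℝ) i = 1 := by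
      rw [show i = (⟨0, by omega⟩ : Fin d) from Fin.ext h, Pi.single_eq_same]
    rw [e1, e2, add_zero]
  · next h =>
    have e1 : (Pi.single (⟨0, by omega⟩ : Fin d) 1 : Fin d → ℝ) i = 0 :=
      Pi.single_eq_of_ne (by intro hc; have := congrArg Fin.val hc; simp at this; omega) 1
    rw [e1, zero_add]
    by_cases hij : (i : ℕ) = (j : ℕ) + 1
    · have e2 : (Pi.single (⟨(j : ℕ) + 1, by have := j.isLt; omega⟩ : Fin d) 1 : Fin d → ℝ) i = 1 := by
        simp [Pi.single_apply, Fin.ext_iff, hij]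
      have e3 : (Pi.single j 1 : Fin (d-1) → ℝ) ⟨(i : ℕ) - 1, by have := i.isLt; omega⟩ = 1 := by
        simp [Pi.single_apply, Fin.ext_iff]; omega
      rw [e2, e3]
    · have e2 : (Pi.single (⟨(j : ℕ) + 1, by have := j.isLt; omega⟩ : Fin d) 1 : Fin d → ℝ) i = 0 :=
        Pi.single_eq_of_ne (by intro hc; have := congrArg Fin.val hc; simp at this; omega) 1
      have e3 : (Pi.single j 1 : Fin (d-1) → ℝ) ⟨(i : ℕ) - 1, by have := i.isLt; omega⟩ = 0 :=
        Pi.single_eq_of_ne (by intro hc; have := congrArg Fin.val hc; simp at this; omega) 1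
      rw [e2, e3]

lemma gA_row_comb (n d : ℕ) (hn : 3 ≤ n) (hd : 2 ≤ d) (hdn : d ≤ n - 1)
    (A : Matrix (Fin d) (Fin (n - d)) ℝ) (x : Fin (d - 1) → ℝ) :
    ∑ i : Fin d, tildeVec d x i •
        (gA n d A : Matrix (Fin n) (Fin n) ℝ) (Fin.castLE (by omega) i)
      = lift n 1 (LApt n d A x) := by
  funext t
  rw [Finset.sum_apply]
  simp only [Pi.smul_apply, smul_eq_mul]
  rcases Nat.lt_or_ge (t : ℕ) d with htd | htd
  · -- t < d : single surviving term i = t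
    rw [Finset.sum_eq_single (⟨(t : ℕ), htd⟩ : Fin d)]
    · have heq : Fin.castLE (by omega : d ≤ n) (⟨(t : ℕ), htd⟩ : Fin d) = t := Fin.ext rfl
      rw [heq, gA_apply, if_pos rfl, mul_one]
      simp only [tildeVec, lift]
      by_cases h0 : (t : ℕ) = 0
      · rw [dif_pos h0, dif_pos h0]
      · rw [dif_neg h0, dif_neg h0]
        simp only [LApt]
        rw [dif_pos (by show (t : ℕ) - 1 < d - 1; omega)]
    · intro i _ hi
      have h1 : Fin.castLE (by omega : d ≤ n) i ≠ t := by
        intro hc; apply hi; apply Fin.ext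
        have := congrArg Fin.val hc; simpa using this
      rw [gA_apply, if_neg h1, dif_neg (by omega), mul_zero]
    · intro h; exact absurd (Finset.mem_univ _) h
  · -- d ≤ t : all terms contribute A entries
    have h0 : ¬ ((t : ℕ) = 0) := by omega
    simp only [lift]
    rw [dif_neg h0]
    simp only [LApt]
    rw [dif_neg (by simp; omega)]
    apply Finset.sum_congr rfl
    intro i _
    have h1 : Fin.castLE (by omega : d ≤ n) i ≠ t := by
      intro hc; have := congrArg Fin.val hc; simp at this; omega
    have h2 : ((Fin.castLE (by omega : d ≤ n) i : Fin n) : ℕ) < d ∧ d ≤ (t : ℕ) := by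
      refine ⟨by simpa using i.isLt, htd⟩
    rw [gA_apply, if_neg h1, dif_pos h2]
    congr 1
    have key : ∀ (a b : Fin d) (c e : Fin (n - d)), a = b → c = e → A a c = A b e := by
      rintro a b c e rfl rfl; rfl
    exact key _ _ _ _ (Fin.ext (by simp)) (Fin.ext (by simp; omega))


end Interp

/-- **Lemma (interpretation of the arithmetic condition).** -/
theorem interpretation_of_K_rational_subspace
    (n d r : ℕ) (hn : 3 ≤ n) (hd : 2 ≤ d) (hdn : d ≤ n - 1)
    (hdr : d ≤ r) (hrn : r ≤ n - 1)
    (K : Subfield ℝ)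
    (A : Matrix (Fin d) (Fin (n - d)) ℝ) :
    (∃ (p : Fin (n - 1) → ℝ) (w : Fin (r - 1) → (Fin (n - 1) → ℝ)),
        (∀ j, p j ∈ K) ∧ (∀ i j, w i j ∈ K) ∧ LinearIndependent ℝ w ∧
        LAset n d hd hdn A ⊆ {y | ∃ c : Fin (r - 1) → ℝ, y = p + ∑ i, c i • w i}) ↔
      (∃ pd ∈ Pblock n d, ∃ pr ∈ Pblock n r, ∃ hK : SLn n,
        (∀ i j : Fin n, (hK : Matrix (Fin n) (Fin n) ℝ) i j ∈ K) ∧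
        gA n d A = pd * pr * hK) := by
  classical
  obtain ⟨m, rfl⟩ : ∃ m, r = m + 1 := ⟨r - 1, by omega⟩
  have hn1 : 0 < n := by omega
  have hdn' : d ≤ n := by omega
  have hrn' : m + 1 ≤ n := by omega
  have hrlt : m + 1 < n := by omega
  constructor
  · -- LHS → RHS
    rintro ⟨p, w, hpK, hwK, hwli, hsub⟩
    set u : Fin (m + 1) → (Fin n → ℝ) :=
      Fin.cons (Interp.lift n 1 p) (fun j : Fin m => Interp.lift n 0 (w j)) with hu
    have huK : ∀ i j, u i j ∈ K := by
      intro i j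
      induction i using Fin.cases with
      | zero =>
        rw [hu, Fin.cons_zero]
        simp only [Interp.lift]
        split
        · exact K.one_mem
        · exact hpK _
      | succ i' =>
        rw [hu, Fin.cons_succ]
        simp only [Interp.lift]
        split
        · exact K.zero_mem
        · exact hwK _ _
    have hker : LinearMap.ker (Interp.lift0Map n) = ⊥ := by
      rw [LinearMap.ker_eq_bot']
      intro x hx
      have h2 := congrArg (Interp.tail n) hx
      rw [Interp.lift0Map_apply, Interp.tail_lift (by omega)] at h2
      exact h2
    have huli : LinearIndependent ℝ u := by
      rw [hu, linearIndependent_fin_cons]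
      constructor
      · have h3 : (fun j : Fin m => Interp.lift n 0 (w j)) = (Interp.lift0Map n) ∘ w := rfl
        rw [h3]
        exact hwli.map' _ hker
      · intro hmem
        have hle : Submodule.span ℝ (Set.range fun j : Fin m => Interp.lift n 0 (w j))
            ≤ LinearMap.ker (LinearMap.proj (R := ℝ) (φ := fun _ : Fin n => ℝ) (⟨0, hn1⟩ : Fin n)) := by
          rw [Submodule.span_le]
          rintro x ⟨j, rfl⟩
          simp only [SetLike.mem_coe, LinearMap.mem_ker, LinearMap.proj_apply]
          exact Interp.lift_zero hn1 0 (w j)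
        have h4 := hle hmem
        simp only [LinearMap.mem_ker, LinearMap.proj_apply] at h4
        rw [Interp.lift_zero hn1 1 p] at h4
        exact one_ne_zero h4
    have hLA : ∀ x : Fin (d - 1) → ℝ,
        Interp.lift n 1 (Interp.LApt n d A x) ∈ Submodule.span ℝ (Set.range u) := by
      intro x
      obtain ⟨c, hc⟩ := hsub ((Interp.mem_LAset_iff hd hdn).2 ⟨x, rfl⟩)
      rw [hc, Interp.lift_one_add]
      refine Submodule.add_mem _ (Submodule.subset_span ⟨0, ?_⟩) ?_
      · rw [hu, Fin.cons_zero]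
      · have h5 : Interp.lift n 0 (∑ i, c i • w i) = ∑ i, c i • Interp.lift n 0 (w i) := by
          rw [← Interp.lift0Map_apply, map_sum]
          apply Finset.sum_congr rfl
          intro i _
          rw [LinearMap.map_smul, Interp.lift0Map_apply]
        rw [h5]
        refine Submodule.sum_mem _ fun i _ =>
          Submodule.smul_mem _ _ (Submodule.subset_span ⟨i.succ, ?_⟩)
        rw [hu, Fin.cons_succ]
    have hrow0 : (gA n d A : Matrix (Fin n) (Fin n) ℝ) (Fin.castLE hdn' ⟨0, by omega⟩)
        = Interp.lift n 1 (Interp.LApt n d A 0) := by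
      have h1 := Interp.gA_row_comb n d hn hd hdn A 0
      rw [Interp.tildeVec_zero hd, Interp.sum_single_smul, one_smul] at h1
      exact h1
    have hrows : ∀ s : Fin n, (s : ℕ) < d →
        (gA n d A : Matrix (Fin n) (Fin n) ℝ) s ∈ Submodule.span ℝ (Set.range u) := by
      intro s hs
      by_cases h0 : (s : ℕ) = 0
      · have heq : s = Fin.castLE hdn' (⟨0, by omega⟩ : Fin d) := Fin.ext (by simpa using h0)
        rw [heq, hrow0]
        exact hLA 0
      · set xe : Fin (d - 1) → ℝ := Pi.single (⟨(s : ℕ) - 1, by omega⟩ : Fin (d - 1)) 1 with hxe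
        have h1 := Interp.gA_row_comb n d hn hd hdn A xe
        rw [hxe, Interp.tildeVec_single hd] at h1
        simp only [Pi.add_apply, add_smul] at h1
        rw [Finset.sum_add_distrib, Interp.sum_single_smul, Interp.sum_single_smul,
          one_smul, one_smul] at h1
        have heq2 : Fin.castLE (by omega : d ≤ n)
            (⟨(⟨(s : ℕ) - 1, by omega⟩ : Fin (d - 1)) + 1, by omega⟩ : Fin d) = s :=
          Fin.ext (by simp; omega)
        rw [heq2] at h1
        have h2 : (gA n d A : Matrix (Fin n) (Fin n) ℝ) s
            = Interp.lift n 1 (Interp.LApt n d A xe) - Interp.lift n 1 (Interp.LApt n d A 0) := by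
          rw [← h1]
          have h3 : Fin.castLE (by omega : d ≤ n) (⟨0, by omega⟩ : Fin d)
              = Fin.castLE hdn' (⟨0, by omega⟩ : Fin d) := rfl
          rw [h3, hrow0]
          abel
        rw [h2]
        exact Submodule.sub_mem _ (hLA xe) (hLA 0)
    obtain ⟨h, hhK, hhrow⟩ := Interp.exists_SL_extend hrlt K u huli huK
    set g' : SLn n := gA n d A * h⁻¹ with hg'
    have hmulinv : (h : Matrix (Fin n) (Fin n) ℝ) * ((h⁻¹ : SLn n) : Matrix (Fin n) (Fin n) ℝ)
        = 1 := by
      rw [← Matrix.SpecialLinearGroup.coe_mul, mul_inv_cancel, Matrix.SpecialLinearGroup.coe_one]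
    have hQ : ∀ s t : Fin n, (s : ℕ) < d → m + 1 ≤ (t : ℕ) →
        (g' : Matrix (Fin n) (Fin n) ℝ) s t = 0 := by
      intro s t hs ht
      obtain ⟨c, hc⟩ := (Submodule.mem_span_range_iff_exists_fun ℝ).1 (hrows s hs)
      rw [hg', Matrix.SpecialLinearGroup.coe_mul, Matrix.mul_apply]
      have hGsv : ∀ v : Fin n, (gA n d A : Matrix (Fin n) (Fin n) ℝ) s v = ∑ i, c i * u i v := by
        intro v
        rw [← hc, Finset.sum_apply]
        apply Finset.sum_congr rfl
        intro i _
        rw [Pi.smul_apply, smul_eq_mul]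
      calc ∑ v, (gA n d A : Matrix (Fin n) (Fin n) ℝ) s v
              * ((h⁻¹ : SLn n) : Matrix (Fin n) (Fin n) ℝ) v t
          = ∑ v, ∑ i, c i * u i v * ((h⁻¹ : SLn n) : Matrix (Fin n) (Fin n) ℝ) v t := by
            apply Finset.sum_congr rfl; intro v _
            rw [hGsv v, Finset.sum_mul]
        _ = ∑ i, ∑ v, c i * u i v * ((h⁻¹ : SLn n) : Matrix (Fin n) (Fin n) ℝ) v t :=
            Finset.sum_comm
        _ = ∑ i : Fin (m+1), c i * (((h : Matrix (Fin n) (Fin n) ℝ)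
              * ((h⁻¹ : SLn n) : Matrix (Fin n) (Fin n) ℝ)) (Fin.castLE hrlt.le i) t) := by
            apply Finset.sum_congr rfl; intro i _
            rw [Matrix.mul_apply, Finset.mul_sum]
            apply Finset.sum_congr rfl; intro v _
            rw [hhrow i]
            ring
        _ = 0 := by
            apply Finset.sum_eq_zero; intro i _
            rw [hmulinv, Matrix.one_apply_ne, mul_zero]
            intro hc2
            have := congrArg Fin.val hc2
            simp at this
            omega
    set V : Submodule ℝ (Fin n → ℝ) :=
      (Interp.Esub n (m + 1)).comap
        (Matrix.vecMulLinear (g' : Matrix (Fin n) (Fin n) ℝ)) with hV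
    have hVrank : Module.finrank ℝ V = m + 1 := Interp.finrank_comap_vecMul hrn' g'
    have hsing : ∀ i : Fin d, (Pi.single (Fin.castLE hdn' i) (1:ℝ) : Fin n → ℝ) ∈ V := by
      intro i
      rw [hV, Submodule.mem_comap, Matrix.vecMulLinear_apply, Interp.vecMul_single]
      intro t ht
      exact hQ _ t (by simpa using i.isLt) ht
    have hsli : LinearIndependent ℝ
        (fun i : Fin d => (Pi.single (Fin.castLE hdn' i) (1:ℝ) : Fin n → ℝ)) := by
      have h6 : (fun i : Fin d => (Pi.single (Fin.castLE hdn' i) (1:ℝ) : Fin n → ℝ))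
          = (Pi.basisFun ℝ (Fin n)) ∘ (Fin.castLE hdn') := by
        funext i; simp [Pi.basisFun_apply]
      rw [h6]
      exact (Pi.basisFun ℝ (Fin n)).linearIndependent.comp _ (Fin.castLE_injective hdn')
    obtain ⟨v, hvli, hvV, hvext⟩ := Interp.ordered_extend (show d ≤ m + 1 from hdr)
      (V : Set (Fin n → ℝ)) _ hsli hsing (by rw [Submodule.span_eq]; exact hVrank)
    obtain ⟨M, -, hMrow⟩ := Interp.exists_SL_extend hrlt (⊤ : Subfield ℝ) v hvli
      (fun i j => trivial)
    have hMs : ∀ (s : Fin n) (hs : (s : ℕ) < m + 1),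
        (M : Matrix (Fin n) (Fin n) ℝ) s = v ⟨(s : ℕ), hs⟩ := by
      intro s hs
      have h7 := hMrow ⟨(s : ℕ), hs⟩
      rw [show Fin.castLE hrlt.le (⟨(s : ℕ), hs⟩ : Fin (m + 1)) = s from Fin.ext rfl] at h7
      exact h7
    have hMPd : M ∈ Pblock n d := by
      intro s t hs ht
      have h1 : (M : Matrix (Fin n) (Fin n) ℝ) s
          = Pi.single (Fin.castLE hdn' (⟨(s : ℕ), hs⟩ : Fin d)) 1 := by
        rw [hMs s (by omega)]
        have h8 := hvext ⟨(s : ℕ), hs⟩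
        rw [show Fin.castLE hdr (⟨(s : ℕ), hs⟩ : Fin d) = ⟨(s : ℕ), by omega⟩ from Fin.ext rfl]
          at h8
        exact h8
      rw [h1]
      refine Pi.single_eq_of_ne ?_ 1
      intro hc2
      have := congrArg Fin.val hc2
      simp at this
      omega
    have hMg' : M * g' ∈ Pblock n (m + 1) := by
      intro s t hs ht
      rw [Matrix.SpecialLinearGroup.coe_mul, Matrix.mul_apply]
      have h2 : Matrix.vecMul (v ⟨(s : ℕ), hs⟩) (g' : Matrix (Fin n) (Fin n) ℝ) t = 0 := by
        have h3 : v ⟨(s : ℕ), hs⟩ ∈ V := hvV _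
        rw [hV, Submodule.mem_comap, Matrix.vecMulLinear_apply] at h3
        exact h3 t ht
      calc ∑ x, (M : Matrix (Fin n) (Fin n) ℝ) s x * (g' : Matrix (Fin n) (Fin n) ℝ) x t
          = Matrix.vecMul (v ⟨(s : ℕ), hs⟩) (g' : Matrix (Fin n) (Fin n) ℝ) t := by
            rw [Interp.vecMul_apply]
            exact Finset.sum_congr rfl fun x _ => by rw [hMs s hs]
        _ = 0 := h2
    refine ⟨M⁻¹, Interp.pblock_inv hMPd, M * g', hMg', h, hhK, ?_⟩
    rw [hg']
    group
  · -- RHS → LHS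
    rintro ⟨pd, hpd, pr, hpr, h, hhK, hfac⟩
    set z0 : Fin n := ⟨0, hn1⟩ with hz
    set g' : SLn n := pd * pr with hg'
    have hQ : ∀ s t : Fin n, (s : ℕ) < d → m + 1 ≤ (t : ℕ) →
        (g' : Matrix (Fin n) (Fin n) ℝ) s t = 0 := by
      intro s t hs ht
      rw [hg', Matrix.SpecialLinearGroup.coe_mul, Matrix.mul_apply]
      apply Finset.sum_eq_zero
      intro x _
      rcases lt_or_ge (x : ℕ) (m + 1) with hx | hx
      · rw [hpr x t hx ht, mul_zero]
      · rw [hpd s x hs (by omega), zero_mul]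
    set u : Fin (m + 1) → (Fin n → ℝ) :=
      fun i => (h : Matrix (Fin n) (Fin n) ℝ) (Fin.castLE hrn' i) with hu
    have huK : ∀ i j, u i j ∈ K := by
      intro i j
      rw [hu]
      exact hhK _ _
    have huli : LinearIndependent ℝ u := by
      have hunit : IsUnit (h : Matrix (Fin n) (Fin n) ℝ) := by
        apply (Matrix.isUnit_iff_isUnit_det _).2
        rw [Matrix.SpecialLinearGroup.det_coe]
        exact isUnit_one
      have hrows : LinearIndependent ℝ (fun i => (h : Matrix (Fin n) (Fin n) ℝ) i) :=
        Matrix.linearIndependent_rows_iff_isUnit.2 hunit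
      exact hrows.comp _ (Fin.castLE_injective hrn')
    have hfac' : (gA n d A : Matrix (Fin n) (Fin n) ℝ)
        = (g' : Matrix (Fin n) (Fin n) ℝ) * (h : Matrix (Fin n) (Fin n) ℝ) := by
      rw [hg', ← Matrix.SpecialLinearGroup.coe_mul, ← hfac]
    have hgrow : ∀ s : Fin n, (s : ℕ) < d →
        (gA n d A : Matrix (Fin n) (Fin n) ℝ) s
          = ∑ i : Fin (m + 1), (g' : Matrix (Fin n) (Fin n) ℝ) s (Fin.castLE hrn' i) • u i := by
      intro s hs
      funext t
      rw [hfac', Matrix.mul_apply]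
      rw [Interp.sum_fin_restrict hrn'
        (fun x => (g' : Matrix (Fin n) (Fin n) ℝ) s x * (h : Matrix (Fin n) (Fin n) ℝ) x t)
        (fun x hx => by
          show (g' : Matrix (Fin n) (Fin n) ℝ) s x * (h : Matrix (Fin n) (Fin n) ℝ) x t = 0
          rw [hQ s x hs hx, zero_mul])]
      rw [Finset.sum_apply]
      apply Finset.sum_congr rfl
      intro i _
      rw [Pi.smul_apply, hu, smul_eq_mul]
    set zc : (Fin (d - 1) → ℝ) → Fin (m + 1) → ℝ :=
      fun x i => ∑ s : Fin d, tildeVec d x s *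
        (g' : Matrix (Fin n) (Fin n) ℝ) (Fin.castLE hdn' s) (Fin.castLE hrn' i) with hzc
    have hlift : ∀ x, Interp.lift n 1 (Interp.LApt n d A x) = ∑ i, zc x i • u i := by
      intro x
      rw [← Interp.gA_row_comb n d hn hd hdn A x]
      calc ∑ s : Fin d, tildeVec d x s
              • (gA n d A : Matrix (Fin n) (Fin n) ℝ) (Fin.castLE (by omega) s)
          = ∑ s : Fin d, ∑ i : Fin (m + 1), (tildeVec d x s *
              (g' : Matrix (Fin n) (Fin n) ℝ) (Fin.castLE hdn' s) (Fin.castLE hrn' i)) • u i := by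
            apply Finset.sum_congr rfl; intro s _
            rw [hgrow (Fin.castLE hdn' s) (by simpa using s.isLt)]
            rw [Finset.smul_sum]
            apply Finset.sum_congr rfl; intro i _
            rw [smul_smul]
        _ = ∑ i, zc x i • u i := by
            rw [Finset.sum_comm]
            apply Finset.sum_congr rfl; intro i _
            rw [hzc]
            dsimp only
            rw [← Finset.sum_smul]
    have hune : ∃ i₀ : Fin (m + 1), u i₀ z0 ≠ 0 := by
      by_contra hcon
      push_neg at hcon
      have h1 := congrFun (hlift 0) z0
      rw [Interp.lift_zero hn1, Finset.sum_apply] at h1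
      have h2 : ∑ i, (zc 0 i • u i) z0 = 0 := by
        apply Finset.sum_eq_zero; intro i _
        rw [Pi.smul_apply, hcon i, smul_zero]
      rw [h2] at h1
      exact one_ne_zero h1
    obtain ⟨i₀, hα⟩ := hune
    set α : ℝ := u i₀ z0 with hαdef
    set P : Fin n → ℝ := α⁻¹ • u i₀ with hP
    have hP0 : P z0 = 1 := by
      rw [hP, Pi.smul_apply, smul_eq_mul, ← hαdef]
      exact inv_mul_cancel₀ hα
    have hPK : ∀ j, P j ∈ K := by
      intro j
      rw [hP, Pi.smul_apply, smul_eq_mul]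
      exact K.mul_mem (K.inv_mem (huK _ _)) (huK _ _)
    have hui₀ : u i₀ = α • P := by
      rw [hP, smul_smul, mul_inv_cancel₀ hα, one_smul]
    set β : Fin m → ℝ := fun j => u (i₀.succAbove j) z0 with hβ
    set W' : Fin m → (Fin n → ℝ) := fun j => u (i₀.succAbove j) - β j • P with hW'
    have hW'0 : ∀ j, W' j z0 = 0 := by
      intro j
      rw [hW']
      dsimp only
      rw [Pi.sub_apply, Pi.smul_apply, hP0, smul_eq_mul, mul_one, hβ, sub_self]
    have hWu : ∀ j, u (i₀.succAbove j) = W' j + β j • P := by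
      intro j
      rw [hW']
      dsimp only
      rw [sub_add_cancel]
    set p : Fin (n - 1) → ℝ := Interp.tail n P with hp
    set wfam : Fin m → (Fin (n - 1) → ℝ) := fun j => Interp.tail n (W' j) with hwfam
    have hwK : ∀ j t, wfam j t ∈ K := by
      intro j t
      have h9 : wfam j t = u (i₀.succAbove j) ⟨(t : ℕ) + 1, by have := t.isLt; omega⟩
          - β j * P ⟨(t : ℕ) + 1, by have := t.isLt; omega⟩ := rfl
      rw [h9]
      exact K.sub_mem (huK _ _) (K.mul_mem (huK _ _) (hPK _))
    have hwli : LinearIndependent ℝ wfam := by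
      rw [Fintype.linearIndependent_iff]
      intro c hc
      have hXz : (∑ j, c j • W' j) z0 = 0 := by
        rw [Finset.sum_apply]
        apply Finset.sum_eq_zero; intro j _
        rw [Pi.smul_apply, hW'0 j, smul_zero]
      have hXt : Interp.tail n (∑ j, c j • W' j) = 0 := by
        have h10 : Interp.tail n (∑ j, c j • W' j) = ∑ j, c j • wfam j := by
          rw [← Interp.tailMap_apply, map_sum]
          apply Finset.sum_congr rfl; intro j _
          rw [LinearMap.map_smul, Interp.tailMap_apply, hwfam]
        rw [h10, hc]
      have hX : ∑ j, c j • W' j = 0 := Interp.eq_zero_head_tail hn1 _ hXz hXt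
      set S : ℝ := ∑ j, c j * β j with hS
      have hexp : ∑ j, c j • W' j
          = ∑ j, c j • u (i₀.succAbove j) - S • P := by
        have h11 : ∀ j, c j • W' j = c j • u (i₀.succAbove j) - (c j * β j) • P := by
          intro j
          rw [hW']
          dsimp only
          rw [smul_sub, smul_smul]
        rw [Finset.sum_congr rfl (fun j _ => h11 j), Finset.sum_sub_distrib,
          ← Finset.sum_smul, hS]
      set γ : Fin (m + 1) → ℝ := fun i =>
        (Pi.single i₀ (-(S * α⁻¹)) : Fin (m + 1) → ℝ) i
          + ∑ j, (Pi.single (i₀.succAbove j) (c j) : Fin (m + 1) → ℝ) i with hγ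
      have hγsum : ∑ i, γ i • u i = 0 := by
        have h12 : ∑ i, γ i • u i
            = (-(S * α⁻¹)) • u i₀ + ∑ j, c j • u (i₀.succAbove j) := by
          rw [hγ]
          dsimp only
          simp only [add_smul]
          rw [Finset.sum_add_distrib, Interp.sum_single_smul]
          congr 1
          have h13 : ∀ i : Fin (m + 1),
              (∑ j, (Pi.single (i₀.succAbove j) (c j) : Fin (m + 1) → ℝ) i) • u i
                = ∑ j, (Pi.single (i₀.succAbove j) (c j) : Fin (m + 1) → ℝ) i • u i :=
            fun i => Finset.sum_smul
          rw [Finset.sum_congr rfl (fun i _ => h13 i), Finset.sum_comm]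
          apply Finset.sum_congr rfl
          intro j _
          rw [Interp.sum_single_smul]
        have h14 : ∑ j, c j • u (i₀.succAbove j) = S • P := by
          have h15 := hX
          rw [hexp] at h15
          exact sub_eq_zero.1 h15
        rw [h12, h14, hui₀, smul_smul, ← add_smul]
        have h16 : -(S * α⁻¹) * α + S = 0 := by
          field_simp
          ring
        rw [h16, zero_smul]
      have hγ0 := (Fintype.linearIndependent_iff.1 huli) γ hγsum
      intro j
      have h15 := hγ0 (i₀.succAbove j)
      rw [hγ] at h15
      dsimp only at h15
      rw [Pi.single_eq_of_ne (Fin.succAbove_ne i₀ j), zero_add] at h15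
      rw [Finset.sum_eq_single j] at h15
      · rw [Pi.single_eq_same] at h15
        exact h15
      · intro b _ hbj
        exact Pi.single_eq_of_ne
          ((Fin.succAbove_right_injective (p := i₀)).ne hbj.symm) _
      · intro hj
        exact absurd (Finset.mem_univ _) hj
    refine ⟨p, wfam, fun j => hPK _, hwK, hwli, ?_⟩
    intro y hy
    obtain ⟨x, rfl⟩ := (Interp.mem_LAset_iff hd hdn).1 hy
    set c : Fin m → ℝ := fun j => zc x (i₀.succAbove j) with hcdef
    set S' : ℝ := zc x i₀ * α + ∑ j, c j * β j with hS'
    have hdecomp : Interp.lift n 1 (Interp.LApt n d A x)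
        = ∑ j, c j • W' j + S' • P := by
      rw [hlift x, Fin.sum_univ_succAbove _ i₀, hui₀]
      have h1 : ∀ j, zc x (i₀.succAbove j) • u (i₀.succAbove j)
          = c j • W' j + (c j * β j) • P := by
        intro j
        rw [hWu j, hcdef]
        dsimp only
        rw [smul_add, smul_smul]
      rw [Finset.sum_congr rfl (fun j _ => h1 j)]
      rw [Finset.sum_add_distrib, ← Finset.sum_smul, smul_smul, hS', add_smul]
      abel
    have hS'1 : S' = 1 := by
      have h1 := congrFun hdecomp z0
      rw [Interp.lift_zero hn1, Pi.add_apply, Finset.sum_apply] at h1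
      have h2 : ∑ j, (c j • W' j) z0 = 0 := by
        apply Finset.sum_eq_zero; intro j _
        rw [Pi.smul_apply, hW'0 j, smul_zero]
      rw [h2, zero_add, Pi.smul_apply, hP0, smul_eq_mul, mul_one] at h1
      exact h1.symm
    have hfin : Interp.LApt n d A x = p + ∑ j, c j • wfam j := by
      have h16 : Interp.LApt n d A x
          = Interp.tail n (Interp.lift n 1 (Interp.LApt n d A x)) :=
        (Interp.tail_lift (by omega) _ _).symm
      rw [h16, hdecomp, hS'1, one_smul]
      rw [← Interp.tailMap_apply, map_add, map_sum]
      simp only [LinearMap.map_smul, Interp.tailMap_apply]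
      rw [add_comm]
    exact ⟨c, hfin⟩
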